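/- Let M be a matching in a finite simple graph G, let k be the length of a shortest M-augmenting path in G, and let P* be a maximal (with respect to inclusion) set of pairwise vertex-disjoint M-augmenting paths of length k. Then M ⊕ E(P*) is a matching, and every (M ⊕ E(P*))-augmenting path has length at least k + 2. -/

import Mathlib

/-- The set of vertices covered by a set `M` of edges. -/
def coveredVerts {V : Type*} (M : Set (Sym2 V)) : Set V := {x : V | ∃ e ∈ M, x ∈ e}

/-- `M` is a matching in `G`: a set of edges of `G` that are pairwise non-adjacent. -/
def IsMatchingSet {V : Type*} (G : SimpleGraph V) (M : Set (Sym2 V)) : Prop :=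
  M ⊆ G.edgeSet ∧ ∀ e ∈ M, ∀ f ∈ M, e ≠ f → ∀ x : V, x ∈ e → x ∉ f

/-- `p` is an `M`-augmenting path: a simple path with at least one edge, both of whose
endpoints are `M`-free, and whose edges alternate between `E ∖ M` and `M` (the edge at
position `i` belongs to `M` iff `i` is odd). -/
def IsAugPath {V : Type*} (G : SimpleGraph V) (M : Set (Sym2 V)) {u v : V}
    (p : G.Walk u v) : Prop :=
  p.IsPath ∧ 0 < p.length ∧ u ∉ coveredVerts M ∧ v ∉ coveredVerts M ∧
    ∀ (i : ℕ) (h : i < p.edges.length), (p.edges.get ⟨i, h⟩ ∈ M ↔ Odd i)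

/-- An `M`-augmenting path in `G`, bundled with its endpoints. -/
structure AugPath {V : Type*} (G : SimpleGraph V) (M : Set (Sym2 V)) where
  src : V
  tgt : V
  walk : G.Walk src tgt
  isAug : IsAugPath G M walk

/-- Two bundled augmenting paths are vertex-disjoint. -/
def AugPath.VDisj {V : Type*} {G : SimpleGraph V} {M M' : Set (Sym2 V)}
    (p : AugPath G M) (q : AugPath G M') : Prop :=
  ∀ x : V, x ∈ p.walk.support → x ∉ q.walk.support

/-- `E(P)`: the set of edges appearing in a (finite) family `P` of augmenting paths. -/
def famEdges {V : Type*} {G : SimpleGraph V} {M : Set (Sym2 V)} {m : ℕ}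
    (P : Fin m → AugPath G M) : Set (Sym2 V) :=
  {e : Sym2 V | ∃ i : Fin m, e ∈ (P i).walk.edges}

open SimpleGraph


namespace HK
variable {V : Type*} {G : SimpleGraph V}

lemma support_get_zero {u v : V} (p : G.Walk u v) (h : 0 < p.support.length) :
    p.support.get ⟨0, h⟩ = u := by
  cases p <;> rfl

lemma support_get_last {u v : V} (p : G.Walk u v) (h : p.length < p.support.length) :
    p.support.get ⟨p.length, h⟩ = v := by
  induction p with
  | nil => rfl
  | cons h q ih =>
    simp only [Walk.support_cons, Walk.length_cons]
    rw [List.get_cons_succ]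
    exact ih _

lemma edge_get {u v : V} (p : G.Walk u v) (i : ℕ) (he : i < p.edges.length)
    (h1 : i < p.support.length) (h2 : i+1 < p.support.length) :
    p.edges.get ⟨i, he⟩ = s(p.support.get ⟨i, h1⟩, p.support.get ⟨i+1, h2⟩) := by
  induction p generalizing i with
  | nil => simp at he
  | cons h q ih =>
    cases i with
    | zero =>
      simp only [Walk.edges_cons, Walk.support_cons, List.get_cons_zero, List.get_cons_succ]
      cases q <;> rfl
    | succ j =>
      simp only [Walk.edges_cons, Walk.support_cons, List.get_cons_succ]
      exact ih j _ _ _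

end HK

namespace HK
open Classical
variable {V : Type*} {G : SimpleGraph V}

/-- total version of support indexing -/
def vtx {u v : V} (p : G.Walk u v) (s : ℕ) : V := p.support.getD s v

lemma vtx_eq_get {u v : V} (p : G.Walk u v) {s : ℕ} (hs : s < p.support.length) :
    vtx p s = p.support.get ⟨s, hs⟩ := List.getD_eq_getElem _ _ hs

lemma vtx_zero {u v : V} (p : G.Walk u v) : vtx p 0 = u := by
  rw [vtx_eq_get p (by simp [Walk.length_support])]
  exact support_get_zero p _

lemma vtx_last {u v : V} (p : G.Walk u v) {s : ℕ} (hs : p.length ≤ s) : vtx p s = v := by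
  rcases eq_or_lt_of_le hs with h | h
  · rw [vtx, ← h, List.getD_eq_getElem _ _ (by simp [Walk.length_support])]
    exact support_get_last p _
  · rw [vtx, List.getD_eq_default]
    simp [Walk.length_support]; omega

lemma vtx_mem {u v : V} (p : G.Walk u v) (s : ℕ) : vtx p s ∈ p.support := by
  by_cases hs : s < p.support.length
  · rw [vtx_eq_get p hs]; exact List.get_mem _ _
  · rw [vtx, List.getD_eq_default _ _ (by omega)]; exact Walk.end_mem_support p

lemma mem_support_iff_vtx {u v : V} (p : G.Walk u v) (x : V) :
    x ∈ p.support ↔ ∃ s, s ≤ p.length ∧ vtx p s = x := by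
  constructor
  · intro hx
    obtain ⟨⟨s, hs⟩, h⟩ := List.mem_iff_get.1 hx
    exact ⟨s, by simpa [Walk.length_support, Nat.lt_succ_iff] using hs,
      by rw [vtx_eq_get p hs]; exact h⟩
  · rintro ⟨s, _, rfl⟩; exact vtx_mem p s

lemma vtx_inj {u v : V} {p : G.Walk u v} (hp : p.IsPath) {s t : ℕ}
    (hs : s ≤ p.length) (ht : t ≤ p.length) (h : vtx p s = vtx p t) : s = t := by
  have hs' : s < p.support.length := by simp [Walk.length_support]; omega
  have ht' : t < p.support.length := by simp [Walk.length_support]; omega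
  rw [vtx_eq_get p hs', vtx_eq_get p ht'] at h
  have := List.nodup_iff_injective_get.1 hp.support_nodup h
  exact Fin.mk.injEq .. ▸ (by injection this)

lemma edge_get_vtx {u v : V} (p : G.Walk u v) (i : ℕ) (he : i < p.edges.length) :
    p.edges.get ⟨i, he⟩ = s(vtx p i, vtx p (i+1)) := by
  have h1 : i < p.support.length := by simp [Walk.length_support, Walk.length_edges] at *; omega
  have h2 : i + 1 < p.support.length := by simp [Walk.length_support, Walk.length_edges] at *; omega
  rw [vtx_eq_get p h1, vtx_eq_get p h2]
  exact edge_get p i he h1 h2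

lemma mem_edge_get {u v : V} (p : G.Walk u v) {i : ℕ} {he : i < p.edges.length} {x : V} :
    x ∈ p.edges.get ⟨i, he⟩ ↔ x = vtx p i ∨ x = vtx p (i+1) := by
  rw [edge_get_vtx p i he]; exact Sym2.mem_iff

lemma vtx_mem_edge_get {u v : V} (p : G.Walk u v) {i : ℕ} (he : i < p.edges.length) {s : ℕ}
    (hs : s = i ∨ s = i + 1) : vtx p s ∈ p.edges.get ⟨i, he⟩ := by
  rw [mem_edge_get]; rcases hs with rfl | rfl <;> simp

lemma matching_unique {C : Set (Sym2 V)} (hC : IsMatchingSet G C) {e f : Sym2 V}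
    (he : e ∈ C) (hf : f ∈ C) {x : V} (hx : x ∈ e) (hy : x ∈ f) : e = f := by
  by_contra hne
  exact hC.2 e he f hf hne x hx hy

lemma pos_helper {s n par : ℕ} (h1 : s ≤ n) (h2 : 0 < n) (hs0 : s = 0 → Odd par)
    (hsn : s = n → Odd (n - 1 + par)) :
    ∃ j, j < n ∧ Odd (j + par) ∧ (s = j ∨ s = j + 1) := by
  rcases eq_or_ne s 0 with rfl | h0
  · exact ⟨0, h2, by simpa using hs0 rfl, Or.inl rfl⟩
  rcases eq_or_ne s n with rfl | hn
  · exact ⟨s - 1, by omega, hsn rfl, Or.inr (by omega)⟩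
  rcases Nat.even_or_odd (s + par) with h | h
  · refine ⟨s - 1, by omega, ?_, Or.inr (by omega)⟩
    simp only [Nat.odd_iff, Nat.even_iff] at *
    omega
  · exact ⟨s, by omega, h, Or.inl rfl⟩
end HK

namespace HK
variable {V : Type*} {G : SimpleGraph V}

/-- alternation pattern: edge `i` is in `C` iff `i + par` is odd. -/
def Alt (C : Set (Sym2 V)) (par : ℕ) {u v : V} (p : G.Walk u v) : Prop :=
  ∀ i (h : i < p.edges.length), (p.edges.get ⟨i, h⟩ ∈ C ↔ Odd (i + par))

/-- edge set of a walk, as a set -/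
def Ep {u v : V} (p : G.Walk u v) : Set (Sym2 V) := {e | e ∈ p.edges}

lemma mem_support_of_mem_edge {u v : V} {p : G.Walk u v} {e : Sym2 V} {x : V}
    (he : e ∈ p.edges) (hx : x ∈ e) : x ∈ p.support := by
  induction e with
  | h a b => rcases Sym2.mem_iff.1 hx with rfl | rfl
             · exact Walk.fst_mem_support_of_mem_edges p he
             · exact Walk.snd_mem_support_of_mem_edges p he

lemma edges_index_inj {u v : V} {p : G.Walk u v} (hp : p.IsPath) {i j : ℕ}
    (hi : i < p.edges.length) (hj : j < p.edges.length)
    (h : p.edges.get ⟨i, hi⟩ = p.edges.get ⟨j, hj⟩) : i = j := by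
  have := List.nodup_iff_injective_get.1 hp.edges_nodup h
  exact Fin.mk.injEq .. ▸ (by injection this)

lemma consec {u v : V} {p : G.Walk u v} (hp : p.IsPath) {i j : ℕ}
    (hi : i < p.edges.length) (hj : j < p.edges.length) {x : V}
    (hxi : x ∈ p.edges.get ⟨i, hi⟩) (hxj : x ∈ p.edges.get ⟨j, hj⟩) (hij : i ≠ j) :
    j = i + 1 ∨ i = j + 1 := by
  have hn : p.edges.length = p.length := Walk.length_edges p
  rcases (mem_edge_get p).1 hxi with ha | ha <;> rcases (mem_edge_get p).1 hxj with hb | hb <;>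
  · rw [ha] at hb
    have := vtx_inj hp (by omega) (by omega) hb
    omega

/-- the workhorse: a matching edge touching a walk with pattern must be a walk edge. -/
lemma cover_mem {C : Set (Sym2 V)} {par : ℕ} (hC : IsMatchingSet G C) {u v : V}
    {p : G.Walk u v} (halt : Alt C par p) (h0 : 0 < p.length)
    (hu : ∀ f ∈ C, u ∈ f → f ∈ p.edges) (hv : ∀ f ∈ C, v ∈ f → f ∈ p.edges)
    {s : ℕ} (hs : s ≤ p.length) {f : Sym2 V} (hf : f ∈ C) (hx : vtx p s ∈ f) :
    f ∈ p.edges := by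
  have hn : p.edges.length = p.length := Walk.length_edges p
  rcases eq_or_ne s 0 with rfl | h0'
  · exact hu f hf (by rwa [vtx_zero] at hx)
  rcases eq_or_ne s p.length with rfl | hn'
  · exact hv f hf (by rwa [vtx_last p le_rfl] at hx)
  obtain ⟨j, hj, hjodd, hjs⟩ := pos_helper hs h0 (fun h => absurd h h0') (fun h => absurd h hn')
  have hj' : j < p.edges.length := by omega
  have he : p.edges.get ⟨j, hj'⟩ ∈ C := (halt j hj').2 hjodd
  have hxe : vtx p s ∈ p.edges.get ⟨j, hj'⟩ := vtx_mem_edge_get p hj' hjs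
  rw [matching_unique hC hf he hx hxe]
  exact List.get_mem _ _

lemma toggle_matching {C : Set (Sym2 V)} (hC : IsMatchingSet G C) {u v : V}
    {p : G.Walk u v} (hp : p.IsPath) (h0 : 0 < p.length) {par : ℕ} (halt : Alt C par p)
    (hu : ∀ f ∈ C, u ∈ f → f ∈ p.edges) (hv : ∀ f ∈ C, v ∈ f → f ∈ p.edges) :
    IsMatchingSet G (symmDiff C (Ep p)) := by
  have hn : p.edges.length = p.length := Walk.length_edges p
  constructor
  · intro e he
    rcases Set.mem_symmDiff.1 he with ⟨h1, _⟩ | ⟨h1, _⟩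
    · exact hC.1 h1
    · exact Walk.edges_subset_edgeSet p h1
  intro e he f hf hne x hxe hxf
  -- helper for the mixed case
  have mixed : ∀ e' ∈ C, e' ∉ Ep p → ∀ f' ∈ Ep p, ∀ y : V, y ∈ e' → y ∈ f' → False := by
    intro e' he' hep f' hf' y hye hyf
    obtain ⟨⟨j, hj⟩, rfl⟩ := List.mem_iff_get.1 hf'
    rcases (mem_edge_get p).1 hyf with hb | hb
    · exact hep (cover_mem hC halt h0 hu hv (by omega) he' (hb ▸ hye))
    · exact hep (cover_mem hC halt h0 hu hv (by omega) he' (hb ▸ hye))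
  rcases Set.mem_symmDiff.1 he with ⟨he1, he2⟩ | ⟨he1, he2⟩ <;>
    rcases Set.mem_symmDiff.1 hf with ⟨hf1, hf2⟩ | ⟨hf1, hf2⟩
  · exact hne (matching_unique hC he1 hf1 hxe hxf)
  · exact mixed e he1 he2 f hf1 x hxe hxf
  · exact mixed f hf1 hf2 e he1 x hxf hxe
  · -- both walk edges, not in C
    obtain ⟨⟨i, hi⟩, rfl⟩ := List.mem_iff_get.1 he1
    obtain ⟨⟨j, hj⟩, rfl⟩ := List.mem_iff_get.1 hf1
    have hij : i ≠ j := fun h => hne (by congr)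
    have := consec hp hi hj hxe hxf hij
    have h1 : ¬ Odd (i + par) := fun h => he2 ((halt i hi).2 h)
    have h2 : ¬ Odd (j + par) := fun h => hf2 ((halt j hj).2 h)
    simp only [Nat.odd_iff] at h1 h2
    omega

end HK

namespace HK
variable {V : Type*} {G : SimpleGraph V}

lemma free_imp {C : Set (Sym2 V)} {x : V} (h : x ∉ coveredVerts C) :
    ∀ f ∈ C, x ∈ f → False := fun f hf hx => h ⟨f, hf, hx⟩

lemma length_odd {C : Set (Sym2 V)} {u v : V} {p : G.Walk u v} (h0 : 0 < p.length)
    (halt : Alt C 0 p) (hv : v ∉ coveredVerts C) : Odd p.length := by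
  have hn : p.edges.length = p.length := Walk.length_edges p
  have hj : p.length - 1 < p.edges.length := by omega
  by_contra hodd
  have h1 : Odd (p.length - 1 + 0) := by simp only [Nat.odd_iff] at *; omega
  have h2 : p.edges.get ⟨p.length - 1, hj⟩ ∈ C := (halt _ hj).2 h1
  have h3 : v ∈ p.edges.get ⟨p.length - 1, hj⟩ := by
    have := vtx_mem_edge_get p hj (s := p.length) (Or.inr (by omega))
    rwa [vtx_last p le_rfl] at this
  exact hv ⟨_, h2, h3⟩

lemma epos_helper {s n : ℕ} (hs : s ≤ n) (hn : Odd n) :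
    ∃ j, j < n ∧ ¬ Odd j ∧ (s = j ∨ s = j + 1) := by
  rcases Nat.even_or_odd s with h | h
  · refine ⟨s, ?_, ?_, Or.inl rfl⟩ <;> simp only [Nat.odd_iff, Nat.even_iff] at * <;> omega
  · refine ⟨s - 1, ?_, ?_, Or.inr ?_⟩ <;> simp only [Nat.odd_iff, Nat.even_iff] at * <;> omega

lemma aug_toggle_matching {C : Set (Sym2 V)} (hC : IsMatchingSet G C) {u v : V}
    {p : G.Walk u v} (hp : p.IsPath) (h0 : 0 < p.length) (halt : Alt C 0 p)
    (hu : u ∉ coveredVerts C) (hv : v ∉ coveredVerts C) :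
    IsMatchingSet G (symmDiff C (Ep p)) :=
  toggle_matching hC hp h0 halt (fun f hf hx => absurd ⟨f, hf, hx⟩ hu)
    (fun f hf hx => absurd ⟨f, hf, hx⟩ hv)

lemma aug_toggle_covered {C : Set (Sym2 V)} (hC : IsMatchingSet G C) {u v : V}
    {p : G.Walk u v} (hp : p.IsPath) (h0 : 0 < p.length) (halt : Alt C 0 p)
    (hu : u ∉ coveredVerts C) (hv : v ∉ coveredVerts C) :
    coveredVerts (symmDiff C (Ep p)) = coveredVerts C ∪ {x | x ∈ p.support} := by
  have hn : p.edges.length = p.length := Walk.length_edges p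
  have hodd : Odd p.length := length_odd h0 halt hv
  ext x
  simp only [Set.mem_union, Set.mem_setOf_eq]
  constructor
  · rintro ⟨f, hf, hx⟩
    rcases Set.mem_symmDiff.1 hf with ⟨h1, _⟩ | ⟨h1, _⟩
    · exact Or.inl ⟨f, h1, hx⟩
    · exact Or.inr (mem_support_of_mem_edge h1 hx)
  · -- common construction: x = vtx p s gives an even walk edge covering x, which is in C ∆ Ep
    have key : ∀ s : ℕ, s ≤ p.length → x = vtx p s → x ∈ coveredVerts (symmDiff C (Ep p)) := by
      intro s hs hxs
      obtain ⟨j, hj, hje, hjs⟩ := epos_helper hs hodd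
      have hj' : j < p.edges.length := by omega
      have h1 : p.edges.get ⟨j, hj'⟩ ∉ C := fun h => hje (by simpa using (halt j hj').1 h)
      refine ⟨_, Set.mem_symmDiff.2 (Or.inr ⟨List.get_mem _ _, h1⟩), ?_⟩
      rw [hxs]; exact vtx_mem_edge_get p hj' hjs
    rintro (⟨f, hf, hx⟩ | hx)
    · by_cases hfe : f ∈ p.edges
      · -- f is a walk edge in C: x is an interior vertex of the walk
        obtain ⟨⟨j, hj⟩, rfl⟩ := List.mem_iff_get.1 hfe
        rcases (mem_edge_get p).1 hx with hb | hb
        · exact key j (by omega) hb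
        · exact key (j+1) (by omega) hb
      · exact ⟨f, Set.mem_symmDiff.2 (Or.inl ⟨hf, hfe⟩), hx⟩
    · obtain ⟨s, hs, rfl⟩ := (mem_support_iff_vtx p x).1 hx
      exact key s hs rfl

end HK

namespace HK
variable {V : Type*} {G : SimpleGraph V}

lemma filter_length {α : Type*} (P : α → Prop) [DecidablePred P] :
    ∀ (l : List α) (par : ℕ),
    (∀ i (hi : i < l.length), (P (l.get ⟨i, hi⟩) ↔ Odd (i + par))) →
    (l.filter (fun a => decide (P a))).length = (l.length + par % 2) / 2 := by
  intro l
  induction l with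
  | nil => intro par _; simp
  | cons a t ih =>
    intro par h
    have h0 : P a ↔ Odd par := by simpa using h 0 (by simp)
    have ht := ih (par + 1) (fun i hi => by
      have := h (i+1) (by simpa using Nat.succ_lt_succ hi)
      rw [← Nat.add_assoc]; simpa [Nat.add_right_comm] using this)
    by_cases hPa : P a
    · have hpar := h0.1 hPa
      simp only [Nat.odd_iff] at hpar
      simp only [List.filter_cons, hPa, decide_eq_true_eq, if_pos, List.length_cons, ht,
        decide_true, if_true]
      omega
    · have hpar : ¬ par % 2 = 1 := fun hh => hPa (h0.2 (Nat.odd_iff.2 hh))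
      simp only [List.filter_cons, hPa, List.length_cons, ht, decide_false, if_false,
        decide_eq_true_eq]
      simp only [if_false, Bool.false_eq_true]
      omega

lemma Ep_eq_coe {u v : V} (p : G.Walk u v) [DecidableEq (Sym2 V)] :
    Ep p = ↑p.edges.toFinset := by
  ext e; simp [Ep]

lemma ncard_Ep {u v : V} {p : G.Walk u v} (hp : p.IsPath) : (Ep p).ncard = p.length := by
  classical
  rw [Ep_eq_coe, Set.ncard_coe_finset, List.toFinset_card_of_nodup hp.edges_nodup,
    Walk.length_edges]

lemma ncard_Ep_inter {C : Set (Sym2 V)} {par : ℕ} {u v : V} {p : G.Walk u v}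
    (hp : p.IsPath) (halt : Alt C par p) :
    (Ep p ∩ C).ncard = (p.length + par % 2) / 2 := by
  classical
  have : Ep p ∩ C = ↑(p.edges.filter (fun e => decide (e ∈ C))).toFinset := by
    ext e; simp [Ep, List.mem_filter, and_comm]
  rw [this, Set.ncard_coe_finset,
    List.toFinset_card_of_nodup (hp.edges_nodup.filter _),
    filter_length _ p.edges par halt, Walk.length_edges]

lemma ncard_Ep_diff {C : Set (Sym2 V)} {par : ℕ} {u v : V} {p : G.Walk u v}
    (hp : p.IsPath) (halt : Alt C par p) :
    (Ep p \ C).ncard = (p.length + (par + 1) % 2) / 2 := by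
  classical
  have : Ep p \ C = ↑(p.edges.filter (fun e => decide (e ∉ C))).toFinset := by
    ext e; simp [Ep, List.mem_filter, and_comm]
  rw [this, Set.ncard_coe_finset,
    List.toFinset_card_of_nodup (hp.edges_nodup.filter _),
    filter_length _ p.edges (par + 1) (fun i hi => by
      have h2 := halt i hi
      rw [Nat.odd_iff] at h2 ⊢
      rw [h2]
      omega),
    Walk.length_edges]

lemma ncard_toggle [Fintype V] {C : Set (Sym2 V)} {u v : V} {p : G.Walk u v} :
    (symmDiff C (Ep p)).ncard + (Ep p ∩ C).ncard = C.ncard + (Ep p \ C).ncard := by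
  classical
  have hsplit : symmDiff C (Ep p) = (C \ (Ep p ∩ C)) ∪ (Ep p \ C) := by
    ext e
    rw [Set.mem_symmDiff]
    simp only [Set.mem_union, Set.mem_diff, Set.mem_inter_iff]
    tauto
  have hdisj : Disjoint (C \ (Ep p ∩ C)) (Ep p \ C) := by
    rw [Set.disjoint_iff]
    rintro e ⟨⟨h1, _⟩, ⟨_, h2⟩⟩
    exact (h2 h1).elim
  rw [hsplit, Set.ncard_union_eq hdisj (Set.toFinite _) (Set.toFinite _),
    Set.ncard_diff Set.inter_subset_right (Set.toFinite _)]
  have : (Ep p ∩ C).ncard ≤ C.ncard :=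
    Set.ncard_le_ncard Set.inter_subset_right (Set.toFinite _)
  omega

lemma aug_ncard_toggle [Fintype V] {C : Set (Sym2 V)} {u v : V} {p : G.Walk u v}
    (hp : p.IsPath) (halt : Alt C 0 p) (hodd : Odd p.length) :
    (symmDiff C (Ep p)).ncard = C.ncard + 1 := by
  have h1 := ncard_toggle (C := C) (p := p)
  rw [ncard_Ep_inter hp halt, ncard_Ep_diff hp halt] at h1
  simp only [Nat.odd_iff] at hodd
  omega

lemma deaug_ncard_toggle [Fintype V] {C : Set (Sym2 V)} {u v : V} {p : G.Walk u v}
    (hp : p.IsPath) (halt : Alt C 1 p) (hodd : Odd p.length) :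
    (symmDiff C (Ep p)).ncard + 1 = C.ncard := by
  have h1 := ncard_toggle (C := C) (p := p)
  rw [ncard_Ep_inter hp halt, ncard_Ep_diff hp halt] at h1
  simp only [Nat.odd_iff] at hodd
  omega

end HK

namespace HK
variable {V : Type*} {G : SimpleGraph V}

lemma filter_mem_sym2 [Fintype V] [DecidableEq V] {a b : V} (hab : a ≠ b) :
    (Finset.univ.filter (fun x => x ∈ s(a, b))) = {a, b} := by
  ext x
  simp [Sym2.mem_iff]

lemma ncard_covered [Fintype V] {C : Set (Sym2 V)} (hC : IsMatchingSet G C) :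
    (coveredVerts C).ncard = 2 * C.ncard := by
  classical
  have hfin : C.Finite := Set.toFinite C
  have hcov : coveredVerts C =
      ↑(hfin.toFinset.biUnion (fun e => Finset.univ.filter (fun x => x ∈ e))) := by
    ext x
    simp only [coveredVerts, Set.mem_setOf_eq, Finset.coe_biUnion, Set.mem_iUnion,
      Finset.coe_filter, Set.mem_setOf_eq, Set.Finite.mem_toFinset, Finset.mem_coe]
    constructor
    · rintro ⟨e, he, hx⟩; exact ⟨e, he, by simp [hx]⟩
    · rintro ⟨e, he, hx⟩; exact ⟨e, he, by simpa using hx⟩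
  rw [hcov, Set.ncard_coe_finset, Finset.card_biUnion]
  · have h2 : ∀ e ∈ hfin.toFinset, (Finset.univ.filter (fun x => x ∈ e)).card = 2 := by
      intro e he
      rw [Set.Finite.mem_toFinset] at he
      have hne : ¬ e.IsDiag := by
        have := hC.1 he
        induction e with
        | h a b => simpa [Sym2.isDiag_iff_proj_eq] using G.ne_of_adj this
      induction e with
      | h a b =>
        have hab : a ≠ b := by simpa [Sym2.isDiag_iff_proj_eq] using hne
        rw [filter_mem_sym2 hab, Finset.card_insert_of_notMem (by simpa using hab),
          Finset.card_singleton]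
    rw [Finset.sum_congr rfl h2, Finset.sum_const, smul_eq_mul, mul_comm,
      Set.ncard_eq_toFinset_card C hfin]
  · intro e he f hf hef
    rw [Finset.mem_coe, Set.Finite.mem_toFinset] at he hf
    rw [Function.onFun, Finset.disjoint_filter]
    intro x _ hxe hxf
    exact hC.2 e he f hf hef x hxe hxf

end HK

namespace HK
variable {V : Type*} {G : SimpleGraph V}

/-- pairwise disjointness part of being a matching -/
def PreM (X : Set (Sym2 V)) : Prop := ∀ e ∈ X, ∀ f ∈ X, e ≠ f → ∀ x : V, x ∈ e → x ∉ f

lemma PreM.subset {X Y : Set (Sym2 V)} (h : PreM Y) (hXY : X ⊆ Y) : PreM X :=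
  fun e he f hf => h e (hXY he) f (hXY hf)

lemma preM_of_matching {C : Set (Sym2 V)} (h : IsMatchingSet G C) : PreM C := h.2

lemma preM_unique {X : Set (Sym2 V)} (hX : PreM X) {e f : Sym2 V}
    (he : e ∈ X) (hf : f ∈ X) {x : V} (hx : x ∈ e) (hy : x ∈ f) : e = f := by
  by_contra hne
  exact hX e he f hf hne x hx hy

/-- walk alternating between `X` (even positions) and `Y` (odd positions) -/
def AltW (X Y : Set (Sym2 V)) {u x : V} (p : G.Walk u x) : Prop :=
  ∀ i (h : i < p.edges.length), p.edges.get ⟨i, h⟩ ∈ (if Even i then X else Y)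

lemma AltW.tail {X Y : Set (Sym2 V)} {u a x : V} {h : G.Adj u a} {p : G.Walk a x}
    (halt : AltW X Y (Walk.cons h p)) : AltW Y X p := by
  intro i hi
  have h2 := halt (i+1) (by simpa using Nat.succ_lt_succ hi)
  simp only [Walk.edges_cons, List.get_cons_succ] at h2
  by_cases he : Even i
  · simpa [he, Nat.even_add_one] using h2
  · simpa [he, Nat.even_add_one] using h2

lemma altW_uniq {X Y : Set (Sym2 V)} (hX : PreM X) (hY : PreM Y) :
    ∀ {u x y : V} (p : G.Walk u x) (q : G.Walk u y), p.IsPath → AltW X Y p →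
      q.IsPath → AltW X Y q → p.length = q.length → p.support = q.support := by
  intro u x y p
  induction p generalizing y X Y with
  | nil =>
    intro q _ _ _ _ hlen
    cases q with
    | nil => rfl
    | cons h q => simp at hlen
  | cons h p ih =>
    rename_i u' a x'
    intro q hp haltp hq haltq hlen
    cases q with
    | nil => simp at hlen
    | cons h' q =>
      rename_i b
      have he1 : s(u', a) ∈ X := by
        have := haltp 0 (by simp [Walk.length_edges])
        simpa using this
      have he2 : s(u', b) ∈ X := by
        have := haltq 0 (by simp [Walk.length_edges])
        simpa using this
      have heq : s(u', a) = s(u', b) :=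
        preM_unique hX he1 he2 (Sym2.mem_mk_left _ _) (Sym2.mem_mk_left _ _)
      have hab : a = b := by
        rcases Sym2.eq_iff.1 heq with ⟨_, h2⟩ | ⟨_, h2⟩
        · exact h2
        · exact absurd h2 h.ne'
      subst hab
      have := ih (X := Y) (Y := X) hY hX q hp.of_cons haltp.tail hq.of_cons haltq.tail
        (by simpa using hlen)
      simp [Walk.support_cons, this]

/-- take the first `n` steps of a walk -/
def wtake {u v : V} : (p : G.Walk u v) → ℕ → Σ y, G.Walk u y
  | .nil, _ => ⟨_, .nil⟩
  | .cons _ _, 0 => ⟨_, .nil⟩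
  | .cons h p, (n+1) => ⟨_, .cons h (wtake p n).2⟩

lemma wtake_length {u v : V} (p : G.Walk u v) (n : ℕ) :
    (wtake p n).2.length = min n p.length := by
  induction p generalizing n with
  | nil => simp [wtake]
  | cons h p ih =>
    cases n with
    | zero => simp [wtake]
    | succ n => simp [wtake, ih, Walk.length_cons]

lemma wtake_edges {u v : V} (p : G.Walk u v) (n : ℕ) :
    (wtake p n).2.edges = p.edges.take n := by
  induction p generalizing n with
  | nil => simp [wtake]
  | cons h p ih =>
    cases n with
    | zero => simp [wtake]
    | succ n => simp [wtake, ih, Walk.edges_cons]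

lemma wtake_support {u v : V} (p : G.Walk u v) (n : ℕ) :
    (wtake p n).2.support = p.support.take (n+1) := by
  induction p generalizing n with
  | nil => simp [wtake, Walk.support_nil]
  | cons h p ih =>
    cases n with
    | zero => simp [wtake]
    | succ n => simp [wtake, ih, Walk.support_cons]

lemma vtx_cons {u a v : V} (h : G.Adj u a) (p : G.Walk a v) (s : ℕ) :
    vtx (Walk.cons h p) (s+1) = vtx p s := by
  simp [vtx, Walk.support_cons, List.getD_cons_succ]

lemma wtake_fst {u v : V} (p : G.Walk u v) {n : ℕ} (hn : n ≤ p.length) :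
    (wtake p n).1 = vtx p n := by
  induction p generalizing n with
  | nil =>
    obtain rfl := Nat.le_zero.1 hn
    simp [wtake, vtx_zero]
  | cons h p ih =>
    cases n with
    | zero => simp [wtake, vtx_zero]
    | succ n =>
      rw [vtx_cons]
      exact ih (by simpa [Walk.length_cons] using hn)

lemma wtake_isPath {u v : V} {p : G.Walk u v} (hp : p.IsPath) (n : ℕ) :
    (wtake p n).2.IsPath := by
  rw [Walk.isPath_def, wtake_support]
  exact (Walk.isPath_def p).1 hp |>.sublist (List.take_sublist _ _)

lemma wtake_altW {X Y : Set (Sym2 V)} {u v : V} {p : G.Walk u v} (halt : AltW X Y p) (n : ℕ) :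
    AltW X Y (wtake p n).2 := by
  intro i hi
  have hi2 := hi
  rw [wtake_edges, List.length_take] at hi2
  have hi' : i < p.edges.length := by omega
  have : (wtake p n).2.edges.get ⟨i, hi⟩ = p.edges.get ⟨i, hi'⟩ := by
    simp only [List.get_eq_getElem]
    simp only [wtake_edges]
    simp [List.getElem_take]
  rw [this]
  exact halt i hi'

end HK

namespace HK
variable {V : Type*} {G : SimpleGraph V}

lemma AltW.even_mem {X Y : Set (Sym2 V)} {u x : V} {p : G.Walk u x} (halt : AltW X Y p)
    {i : ℕ} (hi : i < p.edges.length) (he : Even i) : p.edges.get ⟨i, hi⟩ ∈ X := by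
  have := halt i hi; rwa [if_pos he] at this

lemma AltW.odd_mem {X Y : Set (Sym2 V)} {u x : V} {p : G.Walk u x} (halt : AltW X Y p)
    {i : ℕ} (hi : i < p.edges.length) (he : ¬ Even i) : p.edges.get ⟨i, hi⟩ ∈ Y := by
  have := halt i hi; rwa [if_neg he] at this

lemma edge_other {f : Sym2 V} (hf : f ∈ G.edgeSet) {x : V} (hx : x ∈ f) :
    ∃ y, G.Adj x y ∧ f = s(x, y) := by
  induction f with
  | h a b =>
    rcases Sym2.mem_iff.1 hx with rfl | rfl
    · exact ⟨b, hf, rfl⟩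
    · exact ⟨a, ((G.mem_edgeSet).1 hf).symm, Sym2.eq_swap.symm⟩

lemma concat_isPath {u v w : V} {p : G.Walk u v} (hp : p.IsPath) (h : G.Adj v w)
    (hw : w ∉ p.support) : (p.concat h).IsPath := by
  rw [← Walk.isPath_reverse_iff, Walk.reverse_concat, Walk.cons_isPath_iff,
    Walk.isPath_reverse_iff, Walk.support_reverse]
  exact ⟨hp, by simpa using hw⟩

lemma concat_altW {X Y : Set (Sym2 V)} {u v w : V} {p : G.Walk u v} (h : G.Adj v w)
    (halt : AltW X Y p) {f : Sym2 V} (hfval : f = s(v, w))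
    (hf : f ∈ (if Even p.length then X else Y)) : AltW X Y (p.concat h) := by
  intro i hi
  have hn := Walk.length_edges p
  have hi' : i < p.edges.length + 1 := by
    simpa [Walk.edges_concat, List.concat_eq_append] using hi
  have hget : (p.concat h).edges.get ⟨i, hi⟩ =
      (p.edges ++ [s(v, w)]).get ⟨i, by simpa using hi'⟩ := by
    simp only [List.get_eq_getElem]
    simp only [Walk.edges_concat, List.concat_eq_append]
  rcases lt_or_eq_of_le (Nat.lt_succ_iff.1 hi') with hlt | heq
  · rw [hget]
    have : (p.edges ++ [s(v, w)]).get ⟨i, by simpa using hi'⟩ = p.edges.get ⟨i, hlt⟩ := by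
      simp only [List.get_eq_getElem]
      exact List.getElem_append_left hlt
    rw [this]
    exact halt i hlt
  · subst heq
    rw [hget]
    have : (p.edges ++ [s(v, w)]).get ⟨p.edges.length, by simp⟩ = s(v, w) := by
      simp
    rw [this, ← hfval]
    rwa [hn]

lemma ext_even {A B : Set (Sym2 V)} (hA : IsMatchingSet G A) (hB : IsMatchingSet G B)
    {v x : V} {p : G.Walk v x} (hp : p.IsPath) (halt : AltW (B \ A) (A \ B) p)
    (hv : v ∉ coveredVerts A) (hlen : Even p.length) (hx : x ∈ coveredVerts B) :
    ∃ (y : V) (q : G.Walk v y), q.IsPath ∧ AltW (B \ A) (A \ B) q ∧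
      q.length = p.length + 1 := by
  obtain ⟨f, hfB, hxf⟩ := hx
  have hn := Walk.length_edges p
  have hxv : x = vtx p p.length := (vtx_last p le_rfl).symm
  have hfA : f ∉ A := by
    intro hfA
    rcases Nat.eq_zero_or_pos p.length with h0 | h0
    · have hxv' : x = v := by rw [hxv, h0, vtx_zero]
      exact hv ⟨f, hfA, hxv' ▸ hxf⟩
    · have hl : p.length - 1 < p.edges.length := by omega
      have he : p.edges.get ⟨p.length - 1, hl⟩ ∈ A \ B :=
        halt.odd_mem hl (by simp only [Nat.even_iff] at *; omega)
      have hxe : x ∈ p.edges.get ⟨p.length - 1, hl⟩ := by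
        have hme := vtx_mem_edge_get p hl (s := p.length) (Or.inr (by omega))
        rwa [← hxv] at hme
      exact he.2 (matching_unique hA hfA he.1 hxf hxe ▸ hfB)
  obtain ⟨y, hadj, rfl⟩ := edge_other (hB.1 hfB) hxf
  have hy : y ∉ p.support := by
    intro hy
    obtain ⟨s, hs, hsy⟩ := (mem_support_iff_vtx p y).1 hy
    have hsx : s ≠ p.length := fun h => hadj.ne' (by rw [← hsy, h, ← hxv])
    have hfmem : s(x, y) ∈ p.edges := by
      rcases eq_or_ne s 0 with rfl | hs0
      · have h0' : 0 < p.edges.length := by omega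
        have he0 : p.edges.get ⟨0, h0'⟩ ∈ B \ A := halt.even_mem h0' Even.zero
        have hy0 : y ∈ p.edges.get ⟨0, h0'⟩ := by
          rw [← hsy]
          exact vtx_mem_edge_get p h0' (Or.inl rfl)
        rw [matching_unique hB hfB he0.1 (Sym2.mem_mk_right x y) hy0]
        exact List.get_mem _ _
      · obtain ⟨j, hj, hjodd, hjs⟩ := pos_helper (par := 1) hs (by omega)
          (fun h => absurd h hs0) (fun h => absurd h hsx)
        have hj' : j < p.edges.length := by omega
        have hje : p.edges.get ⟨j, hj'⟩ ∈ B \ A :=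
          halt.even_mem hj' (by simp only [Nat.odd_iff, Nat.even_iff] at *; omega)
        have hyj : y ∈ p.edges.get ⟨j, hj'⟩ := by
          rw [← hsy]
          exact vtx_mem_edge_get p hj' hjs
        rw [matching_unique hB hfB hje.1 (Sym2.mem_mk_right x y) hyj]
        exact List.get_mem _ _
    obtain ⟨⟨j, hj⟩, hjf⟩ := List.mem_iff_get.1 hfmem
    have hxj : x ∈ p.edges.get ⟨j, hj⟩ := hjf ▸ hxf
    rcases (mem_edge_get p).1 hxj with hb | hb
    · have := vtx_inj hp (by omega) (by omega) (hxv ▸ hb : vtx p p.length = vtx p j)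
      omega
    · have := vtx_inj hp (by omega) (by omega) (hxv ▸ hb : vtx p p.length = vtx p (j+1))
      have hj1 : j = p.length - 1 := by omega
      have : p.edges.get ⟨j, hj⟩ ∈ A \ B :=
        halt.odd_mem hj (by simp only [Nat.even_iff] at *; omega)
      exact this.2 (hjf ▸ hfB)
  exact ⟨y, p.concat hadj, concat_isPath hp hadj hy,
    concat_altW hadj halt rfl (by rw [if_pos hlen]; exact ⟨hfB, hfA⟩),
    Walk.length_concat p hadj⟩

lemma ext_odd {A B : Set (Sym2 V)} (hA : IsMatchingSet G A) (hB : IsMatchingSet G B)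
    {v x : V} {p : G.Walk v x} (hp : p.IsPath) (halt : AltW (B \ A) (A \ B) p)
    (hv : v ∉ coveredVerts A) (hlen : ¬ Even p.length) (hx : x ∈ coveredVerts A) :
    ∃ (y : V) (q : G.Walk v y), q.IsPath ∧ AltW (B \ A) (A \ B) q ∧
      q.length = p.length + 1 := by
  obtain ⟨f, hfA, hxf⟩ := hx
  have hn := Walk.length_edges p
  have h0 : 0 < p.length := by
    rcases Nat.eq_zero_or_pos p.length with h0 | h0
    · exact absurd (h0 ▸ Even.zero) hlen
    · exact h0
  have hxv : x = vtx p p.length := (vtx_last p le_rfl).symm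
  have hl : p.length - 1 < p.edges.length := by omega
  have hlast : p.edges.get ⟨p.length - 1, hl⟩ ∈ B \ A :=
    halt.even_mem hl (by simp only [Nat.even_iff] at *; omega)
  have hxlast : x ∈ p.edges.get ⟨p.length - 1, hl⟩ := by
    have hme := vtx_mem_edge_get p hl (s := p.length) (Or.inr (by omega))
    rwa [← hxv] at hme
  have hfB : f ∉ B := by
    intro hfB
    exact hlast.2 (matching_unique hB hfB hlast.1 hxf hxlast ▸ hfA)
  obtain ⟨y, hadj, rfl⟩ := edge_other (hA.1 hfA) hxf
  have hy : y ∉ p.support := by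
    intro hy
    obtain ⟨s, hs, hsy⟩ := (mem_support_iff_vtx p y).1 hy
    have hsx : s ≠ p.length := fun h => hadj.ne' (by rw [← hsy, h, ← hxv])
    have hs0 : s ≠ 0 := by
      intro h
      refine hv ⟨s(x, y), hfA, ?_⟩
      rw [← vtx_zero p, ← h, hsy]
      exact Sym2.mem_mk_right x y
    have hfmem : s(x, y) ∈ p.edges := by
      obtain ⟨j, hj, hjodd, hjs⟩ := pos_helper (par := 0) hs h0
        (fun h => absurd h hs0) (fun h => absurd h hsx)
      have hj' : j < p.edges.length := by omega
      have hje : p.edges.get ⟨j, hj'⟩ ∈ A \ B :=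
        halt.odd_mem hj' (by simp only [Nat.odd_iff, Nat.even_iff] at *; omega)
      have hyj : y ∈ p.edges.get ⟨j, hj'⟩ := by
        rw [← hsy]
        exact vtx_mem_edge_get p hj' hjs
      rw [matching_unique hA hfA hje.1 (Sym2.mem_mk_right x y) hyj]
      exact List.get_mem _ _
    obtain ⟨⟨j, hj⟩, hjf⟩ := List.mem_iff_get.1 hfmem
    have hxj : x ∈ p.edges.get ⟨j, hj⟩ := hjf ▸ hxf
    rcases (mem_edge_get p).1 hxj with hb | hb
    · have := vtx_inj hp (by omega) (by omega) (hxv ▸ hb : vtx p p.length = vtx p j)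
      omega
    · have := vtx_inj hp (by omega) (by omega) (hxv ▸ hb : vtx p p.length = vtx p (j+1))
      have hj1 : j = p.length - 1 := by omega
      have : p.edges.get ⟨j, hj⟩ ∈ B \ A :=
        halt.even_mem hj (by simp only [Nat.even_iff] at *; omega)
      exact this.2 (hjf ▸ hfA)
  exact ⟨y, p.concat hadj, concat_isPath hp hadj hy,
    concat_altW hadj halt rfl (by rw [if_neg hlen]; exact ⟨hfA, hfB⟩),
    Walk.length_concat p hadj⟩

end HK

namespace HK
variable {V : Type*} {G : SimpleGraph V}

lemma AltW.reverse {X Y : Set (Sym2 V)} {u x : V} {p : G.Walk u x} (halt : AltW X Y p)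
    (hev : Even p.length) : AltW Y X p.reverse := by
  intro j hj
  have hn := Walk.length_edges p
  have hj2 := hj
  rw [Walk.length_edges, Walk.length_reverse] at hj2
  have hj' : p.edges.length - 1 - j < p.edges.length := by omega
  have h1 : p.reverse.edges.get ⟨j, hj⟩ = p.edges.get ⟨p.edges.length - 1 - j, hj'⟩ := by
    simp only [List.get_eq_getElem, Walk.edges_reverse]
    exact List.getElem_reverse _
  rw [h1]
  have := halt (p.edges.length - 1 - j) hj'
  by_cases he : Even j
  · rw [if_pos he]
    rw [if_neg (by simp only [Nat.even_iff] at *; omega)] at this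
    exact this
  · rw [if_neg he]
    rw [if_pos (by simp only [Nat.even_iff] at *; omega)] at this
    exact this

lemma vtx_congr {u u' x y : V} {p : G.Walk u x} {q : G.Walk u' y}
    (h : p.support = q.support) {s : ℕ} (hs : s < p.support.length) :
    vtx p s = vtx q s := by
  rw [vtx, vtx, List.getD_eq_getElem _ _ hs, List.getD_eq_getElem _ _ (h ▸ hs)]
  simp only [h]

lemma extract_key {A B : Set (Sym2 V)} (hA : IsMatchingSet G A) (hB : IsMatchingSet G B)
    {v₁ v₂ w₁ w₂ : V} (p₁ : G.Walk v₁ w₁) (p₂ : G.Walk v₂ w₂) (hw : w₁ = w₂)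
    (hp₁ : p₁.IsPath) (hp₂ : p₂.IsPath)
    (halt₁ : AltW (B \ A) (A \ B) p₁) (halt₂ : AltW (B \ A) (A \ B) p₂)
    (hev₁ : Even p₁.length) (hev₂ : Even p₂.length)
    (hne : v₁ ≠ v₂) (hv₁A : v₁ ∉ coveredVerts A) (hle : p₁.length ≤ p₂.length) : False := by
  subst hw
  set r₁ := p₁.reverse with hr₁
  set r₂ := p₂.reverse with hr₂
  have hl₁ : r₁.length = p₁.length := Walk.length_reverse p₁
  have hl₂ : r₂.length = p₂.length := Walk.length_reverse p₂
  have ha₁ : AltW (A \ B) (B \ A) r₁ := halt₁.reverse hev₁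
  have ha₂ : AltW (A \ B) (B \ A) r₂ := halt₂.reverse hev₂
  have hq₁ : r₁.IsPath := hp₁.reverse
  have hq₂ : r₂.IsPath := hp₂.reverse
  set t := wtake r₂ p₁.length with ht
  have htlen : t.2.length = p₁.length := by
    rw [ht, wtake_length]; omega
  have htp : t.2.IsPath := wtake_isPath hq₂ _
  have hta : AltW (A \ B) (B \ A) t.2 := wtake_altW ha₂ _
  have hPreX : PreM (A \ B) := (preM_of_matching hA).subset Set.diff_subset
  have hPreY : PreM (B \ A) := (preM_of_matching hB).subset Set.diff_subset
  have hsup : r₁.support = t.2.support :=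
    altW_uniq hPreX hPreY r₁ t.2 hq₁ ha₁ htp hta (by omega)
  -- endpoints
  have hv1 : vtx r₁ p₁.length = v₁ := by
    rw [← hl₁]; exact vtx_last r₁ le_rfl
  have hvt : vtx t.2 p₁.length = vtx r₂ p₁.length := by
    have h1 : vtx t.2 p₁.length = t.1 := by
      rw [← htlen]; exact vtx_last t.2 le_rfl
    rw [h1, ht, wtake_fst r₂ (by omega)]
  have hv1' : vtx r₂ p₁.length = v₁ := by
    rw [← hvt, ← vtx_congr hsup (by rw [Walk.length_support]; omega), hv1]
  rcases eq_or_lt_of_le hle with heq | hlt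
  · -- equal lengths: v₁ = v₂
    have : vtx r₂ p₁.length = v₂ := by
      rw [heq, ← hl₂]; exact vtx_last r₂ le_rfl
    exact hne (by rw [← hv1', this])
  · -- strict: v₁ is covered by A
    have hj : p₁.length < r₂.edges.length := by rw [Walk.length_edges]; omega
    have he : r₂.edges.get ⟨p₁.length, hj⟩ ∈ A \ B := ha₂.even_mem hj hev₁
    have hv : vtx r₂ p₁.length ∈ r₂.edges.get ⟨p₁.length, hj⟩ :=
      vtx_mem_edge_get r₂ hj (Or.inl rfl)
    exact hv₁A ⟨_, he.1, by rwa [hv1'] at hv⟩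

lemma ncard_diff_inter {α : Type*} (X Y : Set α) (hX : X.Finite) :
    (X \ Y).ncard + (X ∩ Y).ncard = X.ncard := by
  rw [← Set.ncard_union_eq (Set.disjoint_of_subset_right Set.inter_subset_right
    Set.disjoint_sdiff_left) hX.diff (hX.inter_of_left _)]
  congr 1
  ext a
  by_cases h : a ∈ Y <;> simp [h]

lemma extract [Fintype V] {A B : Set (Sym2 V)} (hA : IsMatchingSet G A)
    (hB : IsMatchingSet G B) (hcard : A.ncard < B.ncard) :
    ∃ (u x : V) (p : G.Walk u x), IsAugPath G A p ∧ AltW (B \ A) (A \ B) p := by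
  classical
  by_contra hno
  push_neg at hno
  set S := coveredVerts B \ coveredVerts A with hS
  -- every good start has a maximal alternating path, which must get stuck
  have hprop : ∀ v ∈ S, ∃ (x : V) (p : G.Walk v x), p.IsPath ∧ AltW (B \ A) (A \ B) p ∧
      Even p.length ∧ x ∉ coveredVerts B ∧ x ∈ coveredVerts A := by
    intro v hv
    obtain ⟨hvB, hvA⟩ := hv
    -- choose a maximal alternating path from v
    set L := {n | ∃ (x : V) (p : G.Walk v x), p.IsPath ∧ AltW (B \ A) (A \ B) p ∧
      p.length = n} with hL
    have hne : L.Nonempty := ⟨0, v, .nil, Walk.IsPath.nil, fun i hi => by simp at hi, rfl⟩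
    have hbdd : BddAbove L := ⟨Fintype.card V, by
      rintro n ⟨xx, pp, hpp, _, rfl⟩
      exact le_of_lt hpp.length_lt⟩
    obtain ⟨x, p, hp, halt, hlen⟩ := Nat.sSup_mem hne hbdd
    have hmax : ∀ (y : V) (q : G.Walk v y), q.IsPath → AltW (B \ A) (A \ B) q →
        q.length ≤ p.length := by
      intro y q hq hq2
      rw [hlen]
      exact le_csSup hbdd ⟨y, q, hq, hq2, rfl⟩
    have hev : Even p.length := by
      by_contra hodd
      have hxA : x ∉ coveredVerts A := by
        intro hxA
        obtain ⟨y, q, h1, h2, h3⟩ := ext_odd hA hB hp halt hvA hodd hxA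
        have := hmax y q h1 h2
        omega
      refine hno v x p ⟨hp, ?_, hvA, hxA, ?_⟩ halt
      · rcases Nat.eq_zero_or_pos p.length with h0 | h0
        · exact absurd (h0 ▸ Even.zero) hodd
        · exact h0
      · intro i hi
        constructor
        · intro hiA
          rcases Nat.even_or_odd i with hie | hio
          · exact absurd hiA (halt.even_mem hi hie).2
          · exact hio
        · intro hio
          exact (halt.odd_mem hi (Nat.not_even_iff_odd.2 hio)).1
    have hxB : x ∉ coveredVerts B := by
      intro hxB
      obtain ⟨y, q, h1, h2, h3⟩ := ext_even hA hB hp halt hvA hev hxB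
      have := hmax y q h1 h2
      omega
    have h0 : 0 < p.length := by
      rcases Nat.eq_zero_or_pos p.length with h0 | h0
      · exfalso
        apply hxB
        have h1 := vtx_last p (s := 0) h0.le
        rw [vtx_zero] at h1
        rwa [← h1]
      · exact h0
    have hn := Walk.length_edges p
    have hl : p.length - 1 < p.edges.length := by omega
    have hlast : p.edges.get ⟨p.length - 1, hl⟩ ∈ A \ B :=
      halt.odd_mem hl (by simp only [Nat.even_iff] at *; omega)
    have hxA : x ∈ coveredVerts A := by
      refine ⟨_, hlast.1, ?_⟩
      have hme := vtx_mem_edge_get p hl (s := p.length) (Or.inr (by omega))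
      rwa [vtx_last p le_rfl] at hme
    exact ⟨x, p, hp, halt, hev, hxB, hxA⟩
  choose xf pf hpf haltf hevf hxBf hxAf using hprop
  -- counting
  have hTS : (coveredVerts A \ coveredVerts B).ncard <
      (coveredVerts B \ coveredVerts A).ncard := by
    have h1 := ncard_diff_inter (coveredVerts B) (coveredVerts A) (Set.toFinite _)
    have h2 := ncard_diff_inter (coveredVerts A) (coveredVerts B) (Set.toFinite _)
    rw [ncard_covered hB] at h1
    rw [ncard_covered hA] at h2
    rw [Set.inter_comm] at h2
    omega
  have hmaps : ∀ v ∈ S, (if hv : v ∈ S then xf v hv else v) ∈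
      coveredVerts A \ coveredVerts B := by
    intro v hv
    rw [dif_pos hv]
    exact ⟨hxAf v hv, hxBf v hv⟩
  obtain ⟨v₁, hv₁, v₂, hv₂, hne, heq⟩ :=
    Set.exists_ne_map_eq_of_ncard_lt_of_maps_to hTS hmaps (Set.toFinite _)
  rw [dif_pos hv₁, dif_pos hv₂] at heq
  -- the two maximal paths end at the same vertex: contradiction
  rcases le_total (pf v₁ hv₁).length (pf v₂ hv₂).length with hle | hle
  · exact extract_key hA hB (pf v₁ hv₁) (pf v₂ hv₂) heq
      (hpf v₁ hv₁) (hpf v₂ hv₂) (haltf v₁ hv₁) (haltf v₂ hv₂)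
      (hevf v₁ hv₁) (hevf v₂ hv₂) hne hv₁.2 hle
  · exact extract_key hA hB (pf v₂ hv₂) (pf v₁ hv₁) heq.symm
      (hpf v₂ hv₂) (hpf v₁ hv₁) (haltf v₂ hv₂) (haltf v₁ hv₁)
      (hevf v₂ hv₂) (hevf v₁ hv₁) hne.symm hv₂.2 hle

end HK

namespace HK
variable {V : Type*} {G : SimpleGraph V}

lemma isAug_alt {A : Set (Sym2 V)} {u x : V} {p : G.Walk u x} (h : IsAugPath G A p) :
    Alt A 0 p := by
  intro i hi
  simpa using h.2.2.2.2 i hi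

lemma lemmaD [Fintype V] {A : Set (Sym2 V)} (hA : IsMatchingSet G A) {k : ℕ}
    (HK : ∀ (u x : V) (p : G.Walk u x), IsAugPath G A p → k ≤ p.length) :
    ∀ (t : ℕ) (B : Set (Sym2 V)), IsMatchingSet G B → A.ncard + t ≤ B.ncard →
      t * k ≤ (symmDiff A B).ncard := by
  intro t
  induction t with
  | zero => intro B _ _; simp
  | succ t ih =>
    intro B hB hcard
    obtain ⟨u, x, p, haug, halt⟩ := extract hA hB (by omega)
    have hp := haug.1
    have h0 := haug.2.1
    have hxA := haug.2.2.2.1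
    have hn := Walk.length_edges p
    have hodd : Odd p.length := length_odd h0 (isAug_alt haug) hxA
    -- the B-pattern of p
    have haltB : Alt B 1 p := by
      intro i hi
      rcases Nat.even_or_odd i with hie | hio
      · have := halt.even_mem hi hie
        simp only [Nat.even_iff, Nat.odd_iff] at *
        exact iff_of_true this.1 (by omega)
      · have := halt.odd_mem hi (Nat.not_even_iff_odd.2 hio)
        simp only [Nat.even_iff, Nat.odd_iff] at *
        exact iff_of_false this.2 (by omega)
    -- endpoint conditions for the de-augmentation
    have hu : ∀ f ∈ B, u ∈ f → f ∈ p.edges := by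
      intro f hf hxf
      have h0' : 0 < p.edges.length := by omega
      have he0 : p.edges.get ⟨0, h0'⟩ ∈ B \ A := halt.even_mem h0' Even.zero
      have hu0 : u ∈ p.edges.get ⟨0, h0'⟩ := by
        have := vtx_mem_edge_get p h0' (s := 0) (Or.inl rfl)
        rwa [vtx_zero] at this
      rw [matching_unique hB hf he0.1 hxf hu0]
      exact List.get_mem _ _
    have hv : ∀ f ∈ B, x ∈ f → f ∈ p.edges := by
      intro f hf hxf
      have hl : p.length - 1 < p.edges.length := by omega
      have hel : p.edges.get ⟨p.length - 1, hl⟩ ∈ B \ A :=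
        halt.even_mem hl (by simp only [Nat.even_iff, Nat.odd_iff] at *; omega)
      have hxl : x ∈ p.edges.get ⟨p.length - 1, hl⟩ := by
        have := vtx_mem_edge_get p hl (s := p.length) (Or.inr (by omega))
        rwa [vtx_last p le_rfl] at this
      rw [matching_unique hB hf hel.1 hxf hxl]
      exact List.get_mem _ _
    have hB' : IsMatchingSet G (symmDiff B (Ep p)) := toggle_matching hB hp h0 haltB hu hv
    have hB'card : (symmDiff B (Ep p)).ncard + 1 = B.ncard := deaug_ncard_toggle hp haltB hodd
    -- Ep p is inside the symmetric difference
    have hEp : Ep p ⊆ symmDiff A B := by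
      intro e he
      obtain ⟨⟨i, hi⟩, rfl⟩ := List.mem_iff_get.1 he
      rcases Nat.even_or_odd i with hie | hio
      · have := halt.even_mem hi hie
        exact Set.mem_symmDiff.2 (Or.inr ⟨this.1, this.2⟩)
      · have := halt.odd_mem hi (Nat.not_even_iff_odd.2 hio)
        exact Set.mem_symmDiff.2 (Or.inl ⟨this.1, this.2⟩)
    -- the new symmetric difference
    have hsd : symmDiff A (symmDiff B (Ep p)) = symmDiff A B \ Ep p := by
      rw [← symmDiff_assoc]
      ext e
      rw [Set.mem_symmDiff]
      simp only [Set.mem_diff]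
      constructor
      · rintro (⟨h1, h2⟩ | ⟨h1, h2⟩)
        · exact ⟨h1, h2⟩
        · exact absurd (hEp h1) h2
      · rintro ⟨h1, h2⟩
        exact Or.inl ⟨h1, h2⟩
    have hih := ih (symmDiff B (Ep p)) hB' (by omega)
    rw [hsd] at hih
    have hsub : (symmDiff A B \ Ep p).ncard = (symmDiff A B).ncard - p.length := by
      rw [Set.ncard_diff hEp (Set.toFinite _), ncard_Ep hp]
    have hle2 : p.length ≤ (symmDiff A B).ncard := by
      rw [← ncard_Ep hp]
      exact Set.ncard_le_ncard hEp (Set.toFinite _)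
    have hk := HK u x p haug
    rw [hsub] at hih
    have h2 : (t + 1) * k = t * k + k := by ring
    omega

end HK

namespace HK
variable {V : Type*} {G : SimpleGraph V}

def famUpTo {M : Set (Sym2 V)} {m : ℕ} (P : Fin m → AugPath G M) (j : ℕ) :
    Set (Sym2 V) :=
  {e : Sym2 V | ∃ i : Fin m, i.val < j ∧ e ∈ (P i).walk.edges}

lemma edge_disj {M : Set (Sym2 V)} {m : ℕ} {P : Fin m → AugPath G M}
    (hdisj : ∀ i j, i ≠ j → (P i).VDisj (P j)) {i i' : Fin m} (hne : i ≠ i')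
    {e : Sym2 V} (he : e ∈ (P i).walk.edges) (he' : e ∈ (P i').walk.edges) : False := by
  induction e with
  | h a b =>
    exact hdisj i i' hne a (mem_support_of_mem_edge he (Sym2.mem_mk_left a b))
      (mem_support_of_mem_edge he' (Sym2.mem_mk_left a b))

lemma buildM [Fintype V] {M : Set (Sym2 V)} (hM : IsMatchingSet G M) {k m : ℕ}
    (P : Fin m → AugPath G M) (hlen : ∀ i, (P i).walk.length = k)
    (hdisj : ∀ i j, i ≠ j → (P i).VDisj (P j)) :
    ∀ j, j ≤ m → IsMatchingSet G (symmDiff M (famUpTo P j)) ∧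
      (symmDiff M (famUpTo P j)).ncard = M.ncard + j ∧
      coveredVerts (symmDiff M (famUpTo P j)) = coveredVerts M ∪
        {x | ∃ i : Fin m, i.val < j ∧ x ∈ (P i).walk.support} ∧
      (famUpTo P j).ncard = j * k := by
  intro j
  induction j with
  | zero =>
    intro _
    have h0 : famUpTo P 0 = (∅ : Set (Sym2 V)) := by
      ext e; simp [famUpTo]
    have h1 : symmDiff M (famUpTo P 0) = M := by
      rw [h0]; simp [symmDiff_def]
    refine ⟨by rw [h1]; exact hM, by rw [h1]; ring, ?_, by rw [h0]; simp⟩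
    rw [h1]
    ext x; simp
  | succ j ih =>
    intro hj
    obtain ⟨ihM, ihcard, ihcov, ihfam⟩ := ih (by omega)
    set i₀ : Fin m := ⟨j, by omega⟩ with hi₀
    set w := (P i₀).walk with hw
    have hwaug := (P i₀).isAug
    have hwlen : w.length = k := hlen i₀
    have hkpos : 0 < k := hwlen ▸ hwaug.2.1
    -- the edges of w are new
    have hnew : ∀ e ∈ w.edges, e ∉ famUpTo P j := by
      rintro e he ⟨i', hi', he'⟩
      exact edge_disj hdisj (by intro h; subst h; simp [hi₀] at hi') he' he
    -- famUpTo decomposition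
    have hsplit : famUpTo P (j+1) = famUpTo P j ∪ Ep w := by
      ext e
      simp only [famUpTo, Set.mem_setOf_eq, Set.mem_union, Ep]
      constructor
      · rintro ⟨i', hi', he'⟩
        rcases eq_or_ne i' i₀ with rfl | hne
        · exact Or.inr he'
        · refine Or.inl ⟨i', ?_, he'⟩
          have : i'.val ≠ j := by
            intro h; apply hne; apply Fin.ext; simp [hi₀, h]
          omega
      · rintro (⟨i', hi', he'⟩ | he)
        · exact ⟨i', by omega, he'⟩
        · exact ⟨i₀, by simp [hi₀], he⟩
    have hdisjEp : Disjoint (famUpTo P j) (Ep w) := by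
      rw [Set.disjoint_iff]
      rintro e ⟨he1, he2⟩
      exact absurd he1 (hnew e he2)
    have hstep : symmDiff M (famUpTo P (j+1)) =
        symmDiff (symmDiff M (famUpTo P j)) (Ep w) := by
      rw [symmDiff_assoc, hdisjEp.symmDiff_eq_sup]
      rw [hsplit]
      rfl
    -- w is an augmenting path for the current matching
    set C := symmDiff M (famUpTo P j) with hC
    have hwalt : Alt C 0 w := by
      intro i hi
      have h1 : w.edges.get ⟨i, hi⟩ ∉ famUpTo P j := hnew _ (List.get_mem _ _)
      have h2 : w.edges.get ⟨i, hi⟩ ∈ C ↔ w.edges.get ⟨i, hi⟩ ∈ M := by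
        rw [hC, Set.mem_symmDiff]
        constructor
        · rintro (⟨h3, _⟩ | ⟨h3, _⟩)
          · exact h3
          · exact absurd h3 h1
        · intro h3
          exact Or.inl ⟨h3, h1⟩
      rw [h2]
      simpa using hwaug.2.2.2.2 i hi
    have hsupset : ∀ y ∈ w.support, ∀ i' : Fin m, i' ≠ i₀ → y ∉ (P i').walk.support := by
      intro y hy i' hne hy'
      exact hdisj i' i₀ hne y hy' hy
    have hsrc : (P i₀).src ∉ coveredVerts C := by
      rw [hC, ihcov]
      rintro (h | ⟨i', hi', h⟩)
      · exact hwaug.2.2.1 h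
      · refine hsupset _ (Walk.start_mem_support w) i' ?_ h
        intro hh; rw [hh] at hi'; simp [hi₀] at hi'
    have htgt : (P i₀).tgt ∉ coveredVerts C := by
      rw [hC, ihcov]
      rintro (h | ⟨i', hi', h⟩)
      · exact hwaug.2.2.2.1 h
      · refine hsupset _ (Walk.end_mem_support w) i' ?_ h
        intro hh; rw [hh] at hi'; simp [hi₀] at hi'
    have hwodd : Odd w.length := length_odd hwaug.2.1 hwalt htgt
    refine ⟨?_, ?_, ?_, ?_⟩
    · rw [hstep]
      exact aug_toggle_matching ihM hwaug.1 hwaug.2.1 hwalt hsrc htgt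
    · rw [hstep, aug_ncard_toggle hwaug.1 hwalt hwodd, ihcard]
      omega
    · rw [hstep, aug_toggle_covered ihM hwaug.1 hwaug.2.1 hwalt hsrc htgt, ihcov]
      ext y
      simp only [Set.mem_union, Set.mem_setOf_eq]
      constructor
      · rintro ((h | ⟨i', hi', h⟩) | h)
        · exact Or.inl h
        · exact Or.inr ⟨i', by omega, h⟩
        · exact Or.inr ⟨i₀, by simp [hi₀], h⟩
      · rintro (h | ⟨i', hi', h⟩)
        · exact Or.inl (Or.inl h)
        · rcases eq_or_ne i' i₀ with rfl | hne
          · exact Or.inr h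
          · refine Or.inl (Or.inr ⟨i', ?_, h⟩)
            have : i'.val ≠ j := by
              intro hh; apply hne; apply Fin.ext; simp [hi₀, hh]
            omega
    · rw [hsplit, Set.ncard_union_eq hdisjEp (Set.toFinite _) (Set.toFinite _),
        ihfam, ncard_Ep hwaug.1, hwlen]
      ring

end HK


/-- Hopcroft–Karp. Let `M` be a matching in a finite simple graph
`G`, let `k` be the length of a shortest `M`-augmenting path, and let `P` be a maximal
(w.r.t. inclusion) family of pairwise vertex-disjoint `M`-augmenting paths of length
`k`.  Then `M ⊕ E(P)` is a matching and every `M ⊕ E(P)`-augmenting path has length at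
least `k + 2`. -/
theorem symmDiff_matching_and_aug_length_ge
    {V : Type*} [Fintype V] (G : SimpleGraph V) (M : Set (Sym2 V))
    (hM : IsMatchingSet G M) (k : ℕ)
    (hex : ∃ p : AugPath G M, p.walk.length = k)
    (hshortest : ∀ p : AugPath G M, k ≤ p.walk.length)
    (m : ℕ) (P : Fin m → AugPath G M)
    (hlen : ∀ i, (P i).walk.length = k)
    (hdisj : ∀ i j, i ≠ j → (P i).VDisj (P j))
    (hmaximal : ∀ q : AugPath G M, q.walk.length = k → ¬ (∀ i, q.VDisj (P i))) :
    IsMatchingSet G (symmDiff M (famEdges P)) ∧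
      ∀ q : AugPath G (symmDiff M (famEdges P)), k + 2 ≤ q.walk.length := by
  classical
  have hfam : famEdges P = HK.famUpTo P m := by
    ext e
    simp only [famEdges, HK.famUpTo, Set.mem_setOf_eq]
    constructor
    · rintro ⟨i, hi⟩; exact ⟨i, i.isLt, hi⟩
    · rintro ⟨i, _, hi⟩; exact ⟨i, hi⟩
  obtain ⟨hM', hM'card, hM'cov, hfamcard⟩ := HK.buildM hM P hlen hdisj m le_rfl
  rw [hfam]
  refine ⟨hM', ?_⟩
  intro q
  have hqaug := q.isAug
  have hqodd : Odd q.walk.length :=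
    HK.length_odd hqaug.2.1 (HK.isAug_alt hqaug) hqaug.2.2.2.1
  have hkodd : Odd k := by
    obtain ⟨p0, hp0⟩ := hex
    exact hp0 ▸ HK.length_odd p0.isAug.2.1 (HK.isAug_alt p0.isAug) p0.isAug.2.2.2.1
  by_cases hd : ∀ i, q.VDisj (P i)
  · -- Case A: q is disjoint from all the paths, hence M-augmenting
    have hoff : ∀ y ∈ q.walk.support, ∀ i, y ∉ (P i).walk.support := fun y hy i => hd i y hy
    have hedge : ∀ e ∈ q.walk.edges, e ∉ HK.famUpTo P m := by
      rintro e he ⟨i, _, he'⟩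
      induction e with
      | h a b =>
        exact hoff a (HK.mem_support_of_mem_edge he (Sym2.mem_mk_left a b)) i
          (HK.mem_support_of_mem_edge he' (Sym2.mem_mk_left a b))
    have hfree : ∀ y ∈ q.walk.support, y ∉ coveredVerts (symmDiff M (HK.famUpTo P m)) →
        y ∉ coveredVerts M := by
      rintro y hy hyM' ⟨f, hf, hyf⟩
      by_cases hffam : f ∈ HK.famUpTo P m
      · obtain ⟨i, _, hfi⟩ := hffam
        exact hoff y hy i (HK.mem_support_of_mem_edge hfi hyf)
      · exact hyM' ⟨f, Set.mem_symmDiff.2 (Or.inl ⟨hf, hffam⟩), hyf⟩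
    have hqaugM : IsAugPath G M q.walk := by
      refine ⟨hqaug.1, hqaug.2.1, ?_, ?_, ?_⟩
      · exact hfree _ (SimpleGraph.Walk.start_mem_support _) hqaug.2.2.1
      · exact hfree _ (SimpleGraph.Walk.end_mem_support _) hqaug.2.2.2.1
      · intro i hi
        have h1 := hqaug.2.2.2.2 i hi
        have h2 : q.walk.edges.get ⟨i, hi⟩ ∉ HK.famUpTo P m :=
          hedge _ (List.get_mem _ _)
        rw [← h1]
        rw [Set.mem_symmDiff]
        constructor
        · intro h3; exact Or.inl ⟨h3, h2⟩
        · rintro (⟨h3, _⟩ | ⟨h3, _⟩)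
          · exact h3
          · exact absurd h3 h2
    have hk1 : k ≤ q.walk.length := hshortest ⟨q.src, q.tgt, q.walk, hqaugM⟩
    have hne : q.walk.length ≠ k := by
      intro h
      exact hmaximal ⟨q.src, q.tgt, q.walk, hqaugM⟩ h hd
    simp only [Nat.odd_iff] at hqodd hkodd
    omega
  · -- Case B: q meets some path; counting argument
    push_neg at hd
    obtain ⟨i₀, hviol⟩ := hd
    rw [AugPath.VDisj] at hviol
    push_neg at hviol
    obtain ⟨y, hyq, hyP⟩ := hviol
    -- find the common edge e₀
    have hPlen : (P i₀).walk.length = k := hlen i₀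
    obtain ⟨s, hs, hsy⟩ := (HK.mem_support_iff_vtx (P i₀).walk y).1 hyP
    obtain ⟨j, hj, hje, hjs⟩ := HK.epos_helper (hPlen ▸ hs) hkodd
    have hj' : j < (P i₀).walk.edges.length := by
      rw [SimpleGraph.Walk.length_edges, hPlen]; omega
    have he₀M : (P i₀).walk.edges.get ⟨j, hj'⟩ ∉ M :=
      fun h => hje (((P i₀).isAug.2.2.2.2 j hj').1 h)
    have he₀fam : (P i₀).walk.edges.get ⟨j, hj'⟩ ∈ HK.famUpTo P m :=
      ⟨i₀, i₀.isLt, List.get_mem _ _⟩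
    have he₀M' : (P i₀).walk.edges.get ⟨j, hj'⟩ ∈ symmDiff M (HK.famUpTo P m) :=
      Set.mem_symmDiff.2 (Or.inr ⟨he₀fam, he₀M⟩)
    have hye₀ : y ∈ (P i₀).walk.edges.get ⟨j, hj'⟩ := by
      rw [← hsy]
      exact HK.vtx_mem_edge_get _ hj' hjs
    -- e₀ is also an edge of q
    have he₀q : (P i₀).walk.edges.get ⟨j, hj'⟩ ∈ q.walk.edges := by
      obtain ⟨s', hs', hs'y⟩ := (HK.mem_support_iff_vtx q.walk y).1 hyq
      have hs'0 : s' ≠ 0 := by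
        intro h
        apply hqaug.2.2.1
        rw [← HK.vtx_zero q.walk, ← h, hs'y]
        exact ⟨_, he₀M', hye₀⟩
      have hs'n : s' ≠ q.walk.length := by
        intro h
        apply hqaug.2.2.2.1
        rw [← HK.vtx_last q.walk (le_of_eq h.symm), hs'y]
        exact ⟨_, he₀M', hye₀⟩
      obtain ⟨j', hj'2, hj'odd, hj's⟩ := HK.pos_helper (par := 0) hs' hqaug.2.1
        (fun h => absurd h hs'0) (fun h => absurd h hs'n)
      have hj'3 : j' < q.walk.edges.length := by
        rw [SimpleGraph.Walk.length_edges]; omega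
      have he' : q.walk.edges.get ⟨j', hj'3⟩ ∈ symmDiff M (HK.famUpTo P m) :=
        (hqaug.2.2.2.2 j' hj'3).2 (by simpa using hj'odd)
      have hye' : y ∈ q.walk.edges.get ⟨j', hj'3⟩ := by
        rw [← hs'y]
        exact HK.vtx_mem_edge_get _ hj'3 hj's
      rw [HK.matching_unique hM' he₀M' he' hye₀ hye']
      exact List.get_mem _ _
    -- augment along q
    have hM'' : IsMatchingSet G (symmDiff (symmDiff M (HK.famUpTo P m)) (HK.Ep q.walk)) :=
      HK.aug_toggle_matching hM' hqaug.1 hqaug.2.1 (HK.isAug_alt hqaug)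
        hqaug.2.2.1 hqaug.2.2.2.1
    have hM''card : (symmDiff (symmDiff M (HK.famUpTo P m)) (HK.Ep q.walk)).ncard =
        M.ncard + m + 1 := by
      rw [HK.aug_ncard_toggle hqaug.1 (HK.isAug_alt hqaug) hqodd, hM'card]
    have hMM'' : symmDiff M (symmDiff (symmDiff M (HK.famUpTo P m)) (HK.Ep q.walk)) =
        symmDiff (HK.famUpTo P m) (HK.Ep q.walk) := by
      rw [symmDiff_assoc, symmDiff_symmDiff_cancel_left]
    -- lower bound from Lemma D
    have HK' : ∀ (u x : V) (p : G.Walk u x), IsAugPath G M p → k ≤ p.length :=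
      fun u x p h => hshortest ⟨u, x, p, h⟩
    have hlow : (m + 1) * k ≤
        (symmDiff M (symmDiff (symmDiff M (HK.famUpTo P m)) (HK.Ep q.walk))).ncard :=
      HK.lemmaD hM HK' (m + 1) _ hM'' (by omega)
    rw [hMM''] at hlow
    -- upper bound using the common edge
    have hsub : symmDiff (HK.famUpTo P m) (HK.Ep q.walk) ⊆
        (HK.famUpTo P m ∪ HK.Ep q.walk) \ {(P i₀).walk.edges.get ⟨j, hj'⟩} := by
      intro f hf
      rcases Set.mem_symmDiff.1 hf with ⟨h1, h2⟩ | ⟨h1, h2⟩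
      · refine ⟨Or.inl h1, ?_⟩
        intro h
        rw [Set.mem_singleton_iff] at h
        subst h
        exact h2 he₀q
      · refine ⟨Or.inr h1, ?_⟩
        intro h
        rw [Set.mem_singleton_iff] at h
        subst h
        exact h2 he₀fam
    have he₀un : (P i₀).walk.edges.get ⟨j, hj'⟩ ∈ HK.famUpTo P m ∪ HK.Ep q.walk :=
      Or.inl he₀fam
    have hn1 : ((HK.famUpTo P m ∪ HK.Ep q.walk) \ {(P i₀).walk.edges.get ⟨j, hj'⟩}).ncard =
        (HK.famUpTo P m ∪ HK.Ep q.walk).ncard - 1 :=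
      Set.ncard_diff_singleton_of_mem he₀un
    have hn2 : (HK.famUpTo P m ∪ HK.Ep q.walk).ncard ≤ m * k + q.walk.length := by
      have := Set.ncard_union_le (HK.famUpTo P m) (HK.Ep q.walk)
      rw [hfamcard, HK.ncard_Ep hqaug.1] at this
      exact this
    have hn3 : (symmDiff (HK.famUpTo P m) (HK.Ep q.walk)).ncard ≤
        ((HK.famUpTo P m ∪ HK.Ep q.walk) \ {(P i₀).walk.edges.get ⟨j, hj'⟩}).ncard :=
      Set.ncard_le_ncard hsub (Set.toFinite _)
    have hpos : 1 ≤ (HK.famUpTo P m ∪ HK.Ep q.walk).ncard :=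
      (Set.ncard_pos (Set.toFinite _)).2 ⟨_, he₀un⟩
    have hmul : (m + 1) * k = m * k + k := by ring
    simp only [Nat.odd_iff] at hqodd hkodd
    omega
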